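/- arXiv:2205.10908 — 3 statements merged into one kernel-verified Lean document; each statement's English description precedes it below -/
import Mathlib

section
/- For each natural number r and each complex number z, ∫₀¹ |f_{r,z}(t)|² dt ≥ |Σ_{j=0}^{r+2} z^j/j!|², where f_{r,z}(t) = Σ_{j=0}^{r+1} z^j/j! + t^{r+1} z^{r+2}/(r+1)!. Consequently, the mean-square stability region R_MS^r = {z : ∫₀¹ |f_{r,z}(t)|² dt < 1} is contained in the reference region R_ref^r = {z : |Σ_{j=0}^{r+2} z^j/j!| < 1}. -/
open MeasureTheory Finset

noncomputable def fT (r : ℕ) (z : ℂ) (t : ℝ) : ℂ :=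
  (∑ j ∈ Finset.range (r + 2), z ^ j / (j.factorial : ℂ)) +
    (t : ℂ) ^ (r + 1) * z ^ (r + 2) / ((r + 1).factorial : ℂ)

noncomputable def Fms (r : ℕ) (z : ℂ) : ℝ :=
  ∫ t in (0:ℝ)..1, (‖fT r z t‖) ^ 2

noncomputable def Gas (r : ℕ) (z : ℂ) : ℝ :=
  ∫ t in (0:ℝ)..1, Real.log (‖fT r z t‖)

open Complex in
lemma Fms_eq (r : ℕ) (z : ℂ) :
    Fms r z = normSq (∑ j ∈ Finset.range (r + 2), z ^ j / (j.factorial : ℂ))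
      + normSq (z ^ (r + 2) / ((r + 1).factorial : ℂ)) / (2 * r + 3)
      + 2 * ((∑ j ∈ Finset.range (r + 2), z ^ j / (j.factorial : ℂ)) *
          starRingEnd ℂ (z ^ (r + 2) / ((r + 1).factorial : ℂ))).re / (r + 2) := by
  set a := ∑ j ∈ Finset.range (r + 2), z ^ j / (j.factorial : ℂ) with ha
  set c := z ^ (r + 2) / ((r + 1).factorial : ℂ) with hc
  have hint : ∀ t : ℝ, (‖fT r z t‖) ^ 2 =
      normSq a + normSq c * t ^ (2 * r + 2) + (2 * (a * starRingEnd ℂ c).re) * t ^ (r + 1) := by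
    intro t
    have hfT : fT r z t = a + (↑(t ^ (r + 1)) : ℂ) * c := by
      simp only [fT, ← ha, ← hc, Complex.ofReal_pow]
      ring
    rw [hfT, Complex.sq_norm, Complex.normSq_add]
    have h1 : normSq ((↑(t ^ (r + 1)) : ℂ) * c) = normSq c * t ^ (2 * r + 2) := by
      rw [Complex.normSq_mul, Complex.normSq_ofReal]
      ring
    have h2 : (a * starRingEnd ℂ ((↑(t ^ (r + 1)) : ℂ) * c)).re
        = (a * starRingEnd ℂ c).re * t ^ (r + 1) := by
      rw [map_mul, Complex.conj_ofReal]
      rw [show a * ((↑(t ^ (r + 1)) : ℂ) * starRingEnd ℂ c)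
        = (↑(t ^ (r + 1)) : ℂ) * (a * starRingEnd ℂ c) by ring]
      rw [Complex.re_ofReal_mul]; ring
    rw [h1, h2]; ring
  unfold Fms
  rw [intervalIntegral.integral_congr (fun t _ => hint t)]
  have i1 : IntervalIntegrable (fun t : ℝ => normSq c * t ^ (2 * r + 2)) volume 0 1 := by
    exact (continuous_const.mul (continuous_pow _)).intervalIntegrable _ _
  have i2 : IntervalIntegrable (fun t : ℝ => (2 * (a * starRingEnd ℂ c).re) * t ^ (r + 1))
      volume 0 1 := (continuous_const.mul (continuous_pow _)).intervalIntegrable _ _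
  rw [intervalIntegral.integral_add ((intervalIntegrable_const).add i1) i2,
    intervalIntegral.integral_add intervalIntegrable_const i1,
    intervalIntegral.integral_const, intervalIntegral.integral_const_mul,
    intervalIntegral.integral_const_mul, integral_pow, integral_pow]
  push_cast [smul_eq_mul]
  ring

theorem stmt10 (r : ℕ) :
    (∀ z : ℂ, (‖∑ j ∈ Finset.range (r + 3), z ^ j / (j.factorial : ℂ)‖) ^ 2
        ≤ Fms r z) ∧
    {z : ℂ | Fms r z < 1} ⊆
      {z : ℂ | ‖∑ j ∈ Finset.range (r + 3), z ^ j / (j.factorial : ℂ)‖ < 1} := by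
  have key : ∀ z : ℂ, (‖∑ j ∈ Finset.range (r + 3), z ^ j / (j.factorial : ℂ)‖) ^ 2
      ≤ Fms r z := by
    intro z
    set a := ∑ j ∈ Finset.range (r + 2), z ^ j / (j.factorial : ℂ) with ha
    set c := z ^ (r + 2) / ((r + 1).factorial : ℂ) with hc
    have hS : (∑ j ∈ Finset.range (r + 3), z ^ j / (j.factorial : ℂ))
        = a + c / ((r + 2 : ℕ) : ℂ) := by
      rw [Finset.sum_range_succ, ← ha, hc]
      congr 1
      have hfac : ((r + 2).factorial : ℂ) = ((r + 1).factorial : ℂ) * ((r + 2 : ℕ) : ℂ) := by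
        rw [show r + 2 = (r + 1) + 1 from rfl, Nat.factorial_succ]
        push_cast; ring
      rw [hfac]
      field_simp
    have hcd : c / ((r + 2 : ℕ) : ℂ) = (↑((((r:ℝ) + 2))⁻¹) : ℂ) * c := by
      push_cast
      rw [div_eq_inv_mul]
    rw [hS, hcd, Complex.sq_norm, Complex.normSq_add, Fms_eq, ← ha, ← hc]
    have h1 : Complex.normSq ((↑((((r:ℝ) + 2))⁻¹) : ℂ) * c)
        = (((r:ℝ) + 2))⁻¹ ^ 2 * Complex.normSq c := by
      rw [Complex.normSq_mul, Complex.normSq_ofReal]; ring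
    have h2 : (a * starRingEnd ℂ ((↑((((r:ℝ) + 2))⁻¹) : ℂ) * c)).re
        = (((r:ℝ) + 2))⁻¹ * (a * starRingEnd ℂ c).re := by
      rw [map_mul, Complex.conj_ofReal,
        show a * ((↑((((r:ℝ) + 2))⁻¹) : ℂ) * starRingEnd ℂ c)
          = (↑((((r:ℝ) + 2))⁻¹) : ℂ) * (a * starRingEnd ℂ c) by ring,
        Complex.re_ofReal_mul]
    rw [h1, h2]
    have hns : 0 ≤ Complex.normSq c := Complex.normSq_nonneg c
    have hr : (0:ℝ) < (r:ℝ) + 2 := by positivity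
    have key2 : (((r:ℝ) + 2))⁻¹ ^ 2 * Complex.normSq c
        ≤ Complex.normSq c / (2 * r + 3) := by
      rw [inv_pow, inv_mul_eq_div]
      apply div_le_div_of_nonneg_left hns (by positivity)
      nlinarith [sq_nonneg ((r:ℝ) + 1)]
    have e : 2 * ((((r:ℝ) + 2))⁻¹ * (a * starRingEnd ℂ c).re)
        = 2 * (a * starRingEnd ℂ c).re / ((r:ℝ) + 2) := by
      field_simp
    rw [e]
    linarith
  refine ⟨key, fun z hz => ?_⟩
  have h1 := key z
  have h2 : Fms r z < 1 := hz
  have := norm_nonneg (∑ j ∈ Finset.range (r + 3), z ^ j / (j.factorial : ℂ))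
  simp only [Set.mem_setOf_eq]
  nlinarith
end

section
/- Every complex number z with Re(z) < 0 belongs to R_MS^r for some natural number r; that is, the open left half-plane is contained in the union over r ∈ ℕ of the sets {z ∈ ℂ : ∫₀¹ |f_{r,z}(t)|² dt < 1}, where f_{r,z}(t) = Σ_{j=0}^{r+1} z^j/j! + t^{r+1} z^{r+2}/(r+1)!. -/
open MeasureTheory Finset

theorem stmt14 (z : ℂ) (hz : z.re < 0) : ∃ r : ℕ, Fms r z < 1 := by
  set c : ℝ := Real.exp z.re with hc
  have hc1 : c < 1 := by
    rw [hc]; calc Real.exp z.re < Real.exp 0 := Real.exp_lt_exp.mpr hz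
    _ = 1 := Real.exp_zero
  have hcpos : 0 < c := Real.exp_pos _
  set ε : ℝ := (1 - c) / 2 with hε
  have hεpos : 0 < ε := by rw [hε]; linarith
  -- partial sums of exp converge
  have hsum : HasSum (fun n => z ^ n / (n.factorial : ℂ)) (Complex.exp z) := by
    rw [Complex.exp_eq_exp_ℂ]
    exact NormedSpace.expSeries_div_hasSum_exp z
  have h1 : Filter.Tendsto
      (fun r : ℕ => ‖(∑ j ∈ Finset.range (r + 2), z ^ j / (j.factorial : ℂ))
        - Complex.exp z‖) Filter.atTop (nhds 0) := by
    have := hsum.tendsto_sum_nat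
    have h2 : Filter.Tendsto
        (fun r : ℕ => (∑ j ∈ Finset.range (r + 2), z ^ j / (j.factorial : ℂ)) - Complex.exp z)
        Filter.atTop (nhds 0) := by
      have := (this.comp (Filter.tendsto_add_atTop_nat 2)).sub_const (Complex.exp z)
      simpa using this
    have := h2.norm
    simpa using this
  have h2 : Filter.Tendsto
      (fun r : ℕ => ‖z‖ ^ (r + 2) / ((r + 1).factorial : ℝ))
      Filter.atTop (nhds 0) := by
    have h3 := FloorSemiring.tendsto_pow_div_factorial_atTop ‖z‖ (K := ℝ)
    have h4 := (h3.comp (Filter.tendsto_add_atTop_nat 1)).const_mul ‖z‖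
    simp only [mul_zero] at h4
    refine h4.congr fun r => ?_
    simp only [Function.comp]
    rw [pow_succ]
    ring
  have h5 : Filter.Tendsto
      (fun r : ℕ => ‖(∑ j ∈ Finset.range (r + 2), z ^ j / (j.factorial : ℂ))
        - Complex.exp z‖ + ‖z‖ ^ (r + 2) / ((r + 1).factorial : ℝ))
      Filter.atTop (nhds 0) := by simpa using h1.add h2
  obtain ⟨r, hr⟩ := (h5.eventually (eventually_lt_nhds hεpos)).exists
  refine ⟨r, ?_⟩
  -- pointwise bound on [0,1]
  have key : ∀ t ∈ Set.Icc (0:ℝ) 1, (‖fT r z t‖) ^ 2 ≤ (c + ε) ^ 2 := by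
    intro t ht
    have hb : ‖fT r z t‖ ≤ c + ε := by
      have : ‖fT r z t‖ ≤ ‖Complex.exp z‖ +
          (‖(∑ j ∈ Finset.range (r + 2), z ^ j / (j.factorial : ℂ))
            - Complex.exp z‖ + ‖z‖ ^ (r + 2) / ((r + 1).factorial : ℝ)) := by
        have hsplit : fT r z t = Complex.exp z +
            (((∑ j ∈ Finset.range (r + 2), z ^ j / (j.factorial : ℂ)) - Complex.exp z) +
              (t : ℂ) ^ (r + 1) * z ^ (r + 2) / ((r + 1).factorial : ℂ)) := by
          unfold fT; ring
        rw [hsplit]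
        refine (norm_add_le _ _).trans ?_
        gcongr
        refine (norm_add_le _ _).trans ?_
        gcongr
        have ht1 : ‖(t:ℂ)‖ ≤ 1 := by
          rw [Complex.norm_real, Real.norm_eq_abs, abs_of_nonneg ht.1]; exact ht.2
        calc ‖(t : ℂ) ^ (r + 1) * z ^ (r + 2) / ((r + 1).factorial : ℂ)‖
            = ‖(t:ℂ)‖ ^ (r+1) * ‖z‖ ^ (r + 2) /
              ‖(((r + 1).factorial : ℕ) : ℂ)‖ := by
              simp [norm_div, norm_mul, norm_pow]
          _ ≤ 1 ^ (r+1) * ‖z‖ ^ (r + 2) / ((r + 1).factorial : ℝ) := by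
              rw [Complex.norm_natCast]
              gcongr
          _ = ‖z‖ ^ (r + 2) / ((r + 1).factorial : ℝ) := by ring
      refine this.trans ?_
      rw [Complex.norm_exp]
      exact add_le_add le_rfl hr.le
    have h0 : (0:ℝ) ≤ ‖fT r z t‖ := norm_nonneg _
    nlinarith
  have hcont : Continuous (fun t : ℝ => (‖fT r z t‖) ^ 2 : ℝ → ℝ) := by
    apply Continuous.pow
    apply continuous_norm.comp
    unfold fT
    fun_prop
  have hInt : IntervalIntegrable (fun t : ℝ => (‖fT r z t‖) ^ 2)
      volume 0 1 := hcont.intervalIntegrable 0 1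
  have hle : Fms r z ≤ ∫ _ in (0:ℝ)..1, (c + ε) ^ 2 := by
    unfold Fms
    apply intervalIntegral.integral_mono_on (by norm_num) hInt
      (intervalIntegrable_const)
    exact key
  have : (∫ _ in (0:ℝ)..1, (c + ε) ^ 2 : ℝ) = (c + ε) ^ 2 := by simp
  rw [this] at hle
  have hce : c + ε < 1 := by rw [hε]; linarith
  have : (c + ε) ^ 2 < 1 := by nlinarith
  linarith
end

section
/- The region R_MS^1 = {z ∈ ℂ : ∫₀¹ |1 + z + z²/2 + (t²/2) z³|² dt < 1} is not convex: the points z₁ = 0.01 + i and z₂ = 0.01 − i lie in R_MS^1, but their midpoint 0.01 does not. -/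
open MeasureTheory Finset

lemma fT_one (z : ℂ) (t : ℝ) :
    fT 1 z t = (1 + z + z ^ 2 / 2) + (t : ℂ) ^ 2 * (z ^ 3 / 2) := by
  simp [fT, Finset.sum_range_succ, Nat.factorial]
  ring

lemma poly_int (c0 c1 c2 : ℝ) :
    ∫ t in (0:ℝ)..1, (c0 + c1 * t ^ 2 + c2 * t ^ 4) = c0 + c1 / 3 + c2 / 5 := by
  have h1 : IntervalIntegrable (fun t : ℝ => c0 + c1 * t ^ 2) volume 0 1 :=
    (by continuity : Continuous fun t : ℝ => c0 + c1 * t ^ 2).intervalIntegrable _ _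
  have h2 : IntervalIntegrable (fun t : ℝ => c2 * t ^ 4) volume 0 1 :=
    (by continuity : Continuous fun t : ℝ => c2 * t ^ 4).intervalIntegrable _ _
  have h3 : IntervalIntegrable (fun t : ℝ => (c0 : ℝ)) volume 0 1 :=
    intervalIntegrable_const
  have h4 : IntervalIntegrable (fun t : ℝ => c1 * t ^ 2) volume 0 1 :=
    (by continuity : Continuous fun t : ℝ => c1 * t ^ 2).intervalIntegrable _ _
  rw [intervalIntegral.integral_add h1 h2, intervalIntegral.integral_add h3 h4,
    intervalIntegral.integral_const, intervalIntegral.integral_const_mul,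
    intervalIntegral.integral_const_mul, integral_pow, integral_pow]
  norm_num
  ring

lemma Fms_one (z : ℂ) :
    Fms 1 z = Complex.normSq (1 + z + z ^ 2 / 2)
      + 2 * ((1 + z + z ^ 2 / 2) * (starRingEnd ℂ) (z ^ 3 / 2)).re / 3
      + Complex.normSq (z ^ 3 / 2) / 5 := by
  set a := 1 + z + z ^ 2 / 2 with ha
  set b := z ^ 3 / 2 with hb
  have key : ∀ t : ℝ, (‖fT 1 z t‖) ^ 2 =
      Complex.normSq a + (2 * (a * (starRingEnd ℂ) b).re) * t ^ 2 + Complex.normSq b * t ^ 4 := by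
    intro t
    rw [fT_one, Complex.sq_norm, Complex.normSq_add]
    have h1 : (starRingEnd ℂ) ((t : ℂ) ^ 2 * b) = (t : ℂ) ^ 2 * (starRingEnd ℂ) b := by
      simp [map_mul, ← Complex.ofReal_pow]
    have h2 : Complex.normSq ((t : ℂ) ^ 2 * b) = t ^ 4 * Complex.normSq b := by
      rw [Complex.normSq_mul, ← Complex.ofReal_pow, Complex.normSq_ofReal]
      ring
    rw [h2, h1]
    have h3 : a * ((t : ℂ) ^ 2 * (starRingEnd ℂ) b) = ((t ^ 2 : ℝ) : ℂ) * (a * (starRingEnd ℂ) b) := by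
      push_cast; ring
    rw [h3, Complex.re_ofReal_mul]
    ring
  have : Fms 1 z = ∫ t in (0:ℝ)..1,
      (Complex.normSq a + (2 * (a * (starRingEnd ℂ) b).re) * t ^ 2 + Complex.normSq b * t ^ 4) := by
    unfold Fms
    exact intervalIntegral.integral_congr fun t _ => key t
  rw [this, poly_int]

lemma Fms_one' (z : ℂ) :
    Fms 1 z = Complex.normSq (2 + 2 * z + z ^ 2) / 4
      + ((2 + 2 * z + z ^ 2) * (starRingEnd ℂ) (z ^ 3)).re / 6
      + Complex.normSq (z ^ 3) / 20 := by
  rw [Fms_one]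
  have e1 : (1 : ℂ) + z + z ^ 2 / 2 = (2 + 2 * z + z ^ 2) / 2 := by ring
  rw [e1]
  have n2 : Complex.normSq (2 : ℂ) = 4 := by
    simp [Complex.normSq_apply]; norm_num
  have e2 : Complex.normSq ((2 + 2 * z + z ^ 2) / 2) = Complex.normSq (2 + 2 * z + z ^ 2) / 4 := by
    rw [Complex.normSq_div, n2]
  have e3 : Complex.normSq (z ^ 3 / 2) = Complex.normSq (z ^ 3) / 4 := by
    rw [Complex.normSq_div, n2]
  have e4 : (2 + 2 * z + z ^ 2) / 2 * (starRingEnd ℂ) (z ^ 3 / 2)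
      = ((1 / 4 : ℝ) : ℂ) * ((2 + 2 * z + z ^ 2) * (starRingEnd ℂ) (z ^ 3)) := by
    rw [map_div₀]
    push_cast
    simp [map_ofNat]
    ring
  rw [e2, e3, e4, Complex.re_ofReal_mul]
  ring

theorem stmt17 :
    (1 / 100 + Complex.I) ∈ {z : ℂ | Fms 1 z < 1} ∧
    (1 / 100 - Complex.I) ∈ {z : ℂ | Fms 1 z < 1} ∧
    ((1 : ℂ) / 100) ∉ {z : ℂ | Fms 1 z < 1} ∧
    ¬ Convex ℝ {z : ℂ | Fms 1 z < 1} := by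
  have h1 : (1 / 100 + Complex.I) ∈ {z : ℂ | Fms 1 z < 1} := by
    show Fms 1 _ < 1
    rw [Fms_one']
    norm_num [Complex.normSq_apply, Complex.mul_re, Complex.mul_im, Complex.add_re,
      Complex.add_im, Complex.I_re, Complex.I_im, Complex.one_re, Complex.one_im,
      Complex.conj_re, Complex.conj_im, Complex.div_ofNat_re, Complex.div_ofNat_im,
      Complex.ofReal_re, Complex.ofReal_im, pow_succ]
  have h2 : (1 / 100 - Complex.I) ∈ {z : ℂ | Fms 1 z < 1} := by
    show Fms 1 _ < 1
    rw [Fms_one']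
    norm_num [Complex.normSq_apply, Complex.mul_re, Complex.mul_im, Complex.add_re,
      Complex.add_im, Complex.sub_re, Complex.sub_im, Complex.I_re, Complex.I_im,
      Complex.one_re, Complex.one_im, Complex.conj_re, Complex.conj_im,
      Complex.div_ofNat_re, Complex.div_ofNat_im, pow_succ]
  have h3 : ((1 : ℂ) / 100) ∉ {z : ℂ | Fms 1 z < 1} := by
    simp only [Set.mem_setOf_eq, not_lt]
    rw [Fms_one']
    norm_num [Complex.normSq_apply, Complex.mul_re, Complex.mul_im, Complex.add_re,
      Complex.add_im, Complex.I_re, Complex.I_im, Complex.one_re, Complex.one_im,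
      Complex.conj_re, Complex.conj_im, Complex.div_ofNat_re, Complex.div_ofNat_im, pow_succ]
  refine ⟨h1, h2, h3, fun hc => h3 ?_⟩
  have := hc h1 h2 (by norm_num : (0:ℝ) ≤ 1/2) (by norm_num : (0:ℝ) ≤ 1/2) (by norm_num)
  have e : (1/2 : ℝ) • (1 / 100 + Complex.I) + (1/2 : ℝ) • (1 / 100 - Complex.I) = (1 : ℂ) / 100 := by
    simp [Complex.real_smul]
    ring
  rwa [e] at this
end
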